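/- Suppose the integer k ≥ 0 satisfies ν := k − n/2 + 1 ≤ 0 (so n ≥ 2). Then the ratio of consecutive generation densities diverges at the origin: γ_k(z) → ∞ as z → 0⁺. -/

import Mathlib

open Real MeasureTheory Set Filter Topology

/-- The steady-state generation-`k` density in the normalized distance
`z = |x|√(λ/D)` from the origin:
`𝒜_k(z) = (μ(λB)^k/(k!(4πD)^{n/2})) ∫₀^∞ s^{k−n/2} exp(−λs − z²/(4λs)) ds`. -/
noncomputable def steadyDensity (n : ℕ) (lam D B mu : ℝ) (k : ℕ) (z : ℝ) : ℝ :=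
  (mu * (lam * B) ^ k / ((Nat.factorial k : ℝ) * (4 * π * D) ^ ((n : ℝ) / 2))) *
    ∫ s in Set.Ioi (0:ℝ),
      s ^ ((k : ℝ) - (n : ℝ) / 2) * Real.exp (-lam * s - z ^ 2 / (4 * lam * s))

/-- The consecutive-generation ratio `γ_k(z) = 𝒜_k(z)/𝒜_{k+1}(z)`. -/
noncomputable def genRatio (n : ℕ) (lam D B mu : ℝ) (k : ℕ) (z : ℝ) : ℝ :=
  steadyDensity n lam D B mu k z / steadyDensity n lam D B mu (k + 1) z

noncomputable def Jint (lam a z : ℝ) : ℝ :=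
  ∫ s in Set.Ioi (0:ℝ), s ^ a * Real.exp (-lam * s - z ^ 2 / (4 * lam * s))

lemma pow_div_factorial_le_exp (N : ℕ) {x : ℝ} (hx : 0 ≤ x) :
    x ^ N / (Nat.factorial N : ℝ) ≤ Real.exp x := by
  refine le_trans ?_ (Real.sum_le_exp_of_nonneg hx (N + 1))
  exact Finset.single_le_sum (f := fun i => x ^ i / (Nat.factorial i : ℝ))
    (fun i _ => by positivity) (Finset.self_mem_range_succ N)

lemma Jcont {lam : ℝ} (hlam : 0 < lam) (a z : ℝ) :
    ContinuousOn (fun s : ℝ => s ^ a * Real.exp (-lam * s - z ^ 2 / (4 * lam * s)))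
      (Set.Ioi (0:ℝ)) := by
  refine ContinuousOn.mul ?_ ?_
  · exact fun x hx => (Real.continuousAt_rpow_const x a (Or.inl (ne_of_gt hx))).continuousWithinAt
  · refine Real.continuous_exp.comp_continuousOn ?_
    refine ContinuousOn.sub (by fun_prop) ?_
    refine ContinuousOn.div (by fun_prop) (by fun_prop) ?_
    intro x hx
    have : 0 < x := hx
    positivity

lemma Jintegrable {lam : ℝ} (hlam : 0 < lam) (a : ℝ) {z : ℝ} (hz : 0 < z) :
    IntegrableOn (fun s : ℝ => s ^ a * Real.exp (-lam * s - z ^ 2 / (4 * lam * s)))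
      (Set.Ioi (0:ℝ)) := by
  set f := fun s : ℝ => s ^ a * Real.exp (-lam * s - z ^ 2 / (4 * lam * s)) with hf
  set c := z ^ 2 / (4 * lam) with hc
  have hc0 : 0 < c := by positivity
  have hcs : ∀ s : ℝ, z ^ 2 / (4 * lam * s) = c / s := by
    intro s; rw [hc, div_div]
  have hmeas : ∀ t : Set ℝ, t ⊆ Set.Ioi (0:ℝ) → MeasurableSet t →
      AEStronglyMeasurable f (volume.restrict t) := by
    intro t ht hmt
    exact ((Jcont hlam a z).mono ht).aestronglyMeasurable hmt
  have hsplit : Set.Ioc (0:ℝ) 1 ∪ Set.Ioi (1:ℝ) = Set.Ioi (0:ℝ) :=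
    Set.Ioc_union_Ioi_eq_Ioi zero_le_one
  rw [← hsplit]
  refine IntegrableOn.union ?_ ?_
  · -- bounded on (0,1]
    set N := ⌈-a⌉₊ with hN
    have haN : 0 ≤ a + N := by
      have := Nat.le_ceil (-a)
      linarith
    set M := (Nat.factorial N : ℝ) / c ^ N with hM
    refine Integrable.mono' (g := fun _ => M)
      ((integrableOn_const_iff).mpr (Or.inr measure_Ioc_lt_top))
      (hmeas _ Set.Ioc_subset_Ioi_self measurableSet_Ioc) ?_
    rw [ae_restrict_iff' measurableSet_Ioc]
    filter_upwards with s hs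
    obtain ⟨hs0, hs1⟩ := hs
    have hfs0 : 0 ≤ f s := by
      have := Real.rpow_nonneg hs0.le a
      positivity
    rw [Real.norm_eq_abs, abs_of_nonneg hfs0]
    have hx : 0 < c / s := by positivity
    have h1 : (c / s) ^ N / (Nat.factorial N : ℝ) ≤ Real.exp (c / s) :=
      pow_div_factorial_le_exp N hx.le
    have h2 : Real.exp (-(c / s)) ≤ (Nat.factorial N : ℝ) * s ^ N / c ^ N := by
      rw [Real.exp_neg]
      have hpos : 0 < (c / s) ^ N / (Nat.factorial N : ℝ) := by positivity
      calc (Real.exp (c / s))⁻¹ ≤ ((c / s) ^ N / (Nat.factorial N : ℝ))⁻¹ := by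
            exact inv_anti₀ hpos h1
        _ = (Nat.factorial N : ℝ) * s ^ N / c ^ N := by
            rw [div_pow]
            field_simp
    have h3 : Real.exp (-lam * s - z ^ 2 / (4 * lam * s)) ≤ Real.exp (-(c / s)) := by
      rw [hcs s]
      apply Real.exp_le_exp.mpr
      nlinarith
    have hsa : 0 ≤ s ^ a := Real.rpow_nonneg hs0.le a
    calc f s ≤ s ^ a * ((Nat.factorial N : ℝ) * s ^ N / c ^ N) :=
          mul_le_mul_of_nonneg_left (h3.trans h2) hsa
      _ = (s ^ a * s ^ (N : ℝ)) * ((Nat.factorial N : ℝ) / c ^ N) := by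
          rw [Real.rpow_natCast]; ring
      _ ≤ 1 * ((Nat.factorial N : ℝ) / c ^ N) := by
          refine mul_le_mul_of_nonneg_right ?_ (by positivity)
          rw [← Real.rpow_add hs0]
          exact Real.rpow_le_one hs0.le hs1 haN
      _ = M := one_mul _
  · -- tail
    have hg : IntegrableOn (fun x : ℝ => x ^ max a 0 * Real.exp (-lam * x)) (Set.Ioi (0:ℝ)) := by
      have := integrableOn_rpow_mul_exp_neg_mul_rpow (p := 1) (s := max a 0) (b := lam)
        (lt_of_lt_of_le neg_one_lt_zero (le_max_right a 0)) zero_lt_one hlam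
      simpa [Real.rpow_one] using this
    refine Integrable.mono' (hg.mono_set (Set.Ioi_subset_Ioi zero_le_one))
      (hmeas _ (Set.Ioi_subset_Ioi zero_le_one) measurableSet_Ioi) ?_
    rw [ae_restrict_iff' measurableSet_Ioi]
    filter_upwards with s hs
    have hs1 : (1:ℝ) < s := hs
    have hs0 : (0:ℝ) < s := lt_trans zero_lt_one hs1
    have hfs0 : 0 ≤ f s := by
      have := Real.rpow_nonneg hs0.le a
      positivity
    rw [Real.norm_eq_abs, abs_of_nonneg hfs0]
    refine mul_le_mul ?_ ?_ (Real.exp_pos _).le (Real.rpow_nonneg hs0.le _)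
    · exact Real.rpow_le_rpow_of_exponent_le hs1.le (le_max_left a 0)
    · apply Real.exp_le_exp.mpr
      have : 0 < 4 * lam * s := by positivity
      have : 0 ≤ z ^ 2 / (4 * lam * s) := by positivity
      linarith

lemma Jpos {lam : ℝ} (hlam : 0 < lam) (a : ℝ) {z : ℝ} (hz : 0 < z) :
    0 < Jint lam a z := by
  rw [Jint, setIntegral_pos_iff_support_of_nonneg_ae ?hnn (Jintegrable hlam a hz)]
  case hnn =>
    filter_upwards [ae_restrict_mem measurableSet_Ioi] with s hs
    have hs0 : (0:ℝ) < s := hs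
    have := Real.rpow_nonneg hs0.le a
    positivity
  have hsub : Set.Ioi (0:ℝ) ⊆
      Function.support (fun s : ℝ => s ^ a * Real.exp (-lam * s - z ^ 2 / (4 * lam * s)))
        ∩ Set.Ioi 0 := by
    intro s hs
    have hs0 : (0:ℝ) < s := hs
    refine ⟨?_, hs⟩
    have h1 : 0 < s ^ a := Real.rpow_pos_of_pos hs0 a
    have h2 : 0 < Real.exp (-lam * s - z ^ 2 / (4 * lam * s)) := Real.exp_pos _
    exact ne_of_gt (mul_pos h1 h2)
  calc (0:ENNReal) < ⊤ := by simp
    _ = volume (Set.Ioi (0:ℝ)) := Real.volume_Ioi.symm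
    _ ≤ _ := measure_mono hsub

lemma Jtendsto {lam : ℝ} (hlam : 0 < lam) {a : ℝ} (ha : a ≤ -1) :
    Tendsto (fun z => Jint lam a z) (nhdsWithin 0 (Set.Ioi 0)) atTop := by
  rw [tendsto_atTop]
  intro M
  set M' := max M 1 with hM'
  have hM'0 : 0 < M' := lt_of_lt_of_le one_pos (le_max_right M 1)
  set ε := Real.exp (-(2 * M' * Real.exp lam)) with hε
  have hε0 : 0 < ε := Real.exp_pos _
  have hε1 : ε < 1 := by
    rw [hε, Real.exp_lt_one_iff]
    have := Real.exp_pos lam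
    nlinarith
  have hlogε : -Real.log ε = 2 * M' * Real.exp lam := by
    rw [hε, Real.log_exp, neg_neg]
  set r := min (Real.sqrt (4 * lam * ε * Real.log 2)) 1 with hr
  have hr0 : 0 < r := by
    refine lt_min ?_ one_pos
    apply Real.sqrt_pos.mpr
    have := Real.log_pos one_lt_two
    positivity
  filter_upwards [Ioo_mem_nhdsGT_of_mem (Set.mem_Ico.mpr ⟨le_rfl, hr0⟩)] with z hz
  obtain ⟨hz0, hzr⟩ := hz
  have hzsq : z ^ 2 / (4 * lam * ε) ≤ Real.log 2 := by
    have h1 : z ^ 2 < 4 * lam * ε * Real.log 2 := by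
      have h2 : z < Real.sqrt (4 * lam * ε * Real.log 2) :=
        lt_of_lt_of_le hzr (min_le_left _ _)
      have h3 : z ^ 2 < Real.sqrt (4 * lam * ε * Real.log 2) ^ 2 := by
        exact pow_lt_pow_left₀ h2 hz0.le (by norm_num)
      rwa [Real.sq_sqrt (by have := Real.log_pos one_lt_two; positivity)] at h3
    rw [div_le_iff₀ (by positivity)]
    linarith
  set f := fun s : ℝ => s ^ a * Real.exp (-lam * s - z ^ 2 / (4 * lam * s)) with hfdef
  set K := Real.exp (-lam - z ^ 2 / (4 * lam * ε)) with hK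
  have hK0 : 0 < K := Real.exp_pos _
  have hnn : 0 ≤ᵐ[volume.restrict (Set.Ioi (0:ℝ))] f := by
    filter_upwards [ae_restrict_mem measurableSet_Ioi] with s hs
    have hs0 : (0:ℝ) < s := hs
    have := Real.rpow_nonneg hs0.le a
    positivity
  have hint : IntegrableOn f (Set.Ioi (0:ℝ)) := Jintegrable hlam a hz0
  -- step 1: restrict to Ioc ε 1
  have step1 : ∫ s in Set.Ioc ε 1, f s ≤ Jint lam a z := by
    rw [Jint]
    refine setIntegral_mono_set hint hnn ?_
    exact HasSubset.Subset.eventuallyLE (fun s hs => lt_trans hε0 hs.1)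
  -- step 2: lower bound on Ioc ε 1 by K * s⁻¹
  have hKint : IntegrableOn (fun s : ℝ => K * s⁻¹) (Set.Ioc ε 1) := by
    refine (ContinuousOn.integrableOn_compact isCompact_Icc ?_).mono_set Set.Ioc_subset_Icc_self
    refine continuousOn_const.mul (continuousOn_id.inv₀ ?_)
    intro x hx
    exact ne_of_gt (lt_of_lt_of_le hε0 hx.1)
  have step2 : ∫ s in Set.Ioc ε 1, K * s⁻¹ ≤ ∫ s in Set.Ioc ε 1, f s := by
    refine setIntegral_mono_on hKint (hint.mono_set (fun s hs => lt_trans hε0 hs.1))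
      measurableSet_Ioc ?_
    intro s hs
    obtain ⟨hsε, hs1⟩ := hs
    have hs0 : 0 < s := lt_trans hε0 hsε
    have hA : s⁻¹ ≤ s ^ a := by
      rw [← Real.rpow_neg_one s]
      exact Real.rpow_le_rpow_of_exponent_ge hs0 hs1 ha
    have hB : K ≤ Real.exp (-lam * s - z ^ 2 / (4 * lam * s)) := by
      rw [hK]
      apply Real.exp_le_exp.mpr
      have h1 : lam * s ≤ lam := by nlinarith
      have h2 : z ^ 2 / (4 * lam * s) ≤ z ^ 2 / (4 * lam * ε) := by
        apply div_le_div_of_nonneg_left (by positivity) (by positivity)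
        nlinarith
      nlinarith
    calc K * s⁻¹ ≤ Real.exp (-lam * s - z ^ 2 / (4 * lam * s)) * s ^ a :=
          mul_le_mul hB hA (by positivity) (Real.exp_pos _).le
      _ = f s := mul_comm _ _
  -- step 3: compute the K-integral
  have step3 : ∫ s in Set.Ioc ε 1, K * s⁻¹ = K * (-Real.log ε) := by
    rw [← intervalIntegral.integral_of_le hε1.le, intervalIntegral.integral_const_mul,
      integral_inv_of_pos hε0 one_pos]
    rw [Real.log_div one_ne_zero (ne_of_gt hε0), Real.log_one]
    ring
  -- step 4: conclude
  have hKlb : Real.exp (-lam) * (1/2) ≤ K := by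
    rw [hK, Real.exp_sub]
    have h1 : Real.exp (-(z ^ 2 / (4 * lam * ε))) ≥ Real.exp (-Real.log 2) := by
      apply Real.exp_le_exp.mpr
      linarith
    have h2 : Real.exp (-Real.log 2) = 1/2 := by
      rw [Real.exp_neg, Real.exp_log two_pos]
      norm_num
    calc Real.exp (-lam) * (1/2) = Real.exp (-lam) * Real.exp (-Real.log 2) := by rw [h2]
      _ ≤ Real.exp (-lam) * Real.exp (-(z ^ 2 / (4 * lam * ε))) := by
          exact mul_le_mul_of_nonneg_left h1 (Real.exp_pos _).le
      _ = Real.exp (-lam) / Real.exp (z ^ 2 / (4 * lam * ε)) := by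
          rw [Real.exp_neg (z ^ 2 / (4 * lam * ε))]
          ring
  have hfin : M ≤ K * (-Real.log ε) := by
    have hexp : Real.exp (-lam) * Real.exp lam = 1 := by
      rw [← Real.exp_add]; simp
    have hlog0 : 0 < -Real.log ε := by
      rw [hlogε]; have := Real.exp_pos lam; positivity
    calc M ≤ M' := le_max_left M 1
      _ = (Real.exp (-lam) * (1/2)) * (2 * M' * Real.exp lam) := by
          field_simp
          nlinarith [Real.exp_pos lam, hexp]
      _ ≤ K * (2 * M' * Real.exp lam) := by
          refine mul_le_mul_of_nonneg_right hKlb ?_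
          have := Real.exp_pos lam; positivity
      _ = K * (-Real.log ε) := by rw [hlogε]
  calc M ≤ K * (-Real.log ε) := hfin
    _ = ∫ s in Set.Ioc ε 1, K * s⁻¹ := step3.symm
    _ ≤ ∫ s in Set.Ioc ε 1, f s := step2
    _ ≤ Jint lam a z := step1

lemma Jsucc_le {lam : ℝ} (hlam : 0 < lam) (a : ℝ) (ha : a + 1 ≤ 0) {z δ : ℝ}
    (hz : 0 < z) (hδ : 0 < δ) :
    Jint lam (a+1) z ≤ δ * Jint lam a z + δ ^ (a+1) * ∫ s in Set.Ioi δ, Real.exp (-lam * s) := by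
  set f := fun s : ℝ => s ^ (a+1) * Real.exp (-lam * s - z ^ 2 / (4 * lam * s)) with hfdef
  set g := fun s : ℝ => s ^ a * Real.exp (-lam * s - z ^ 2 / (4 * lam * s)) with hgdef
  have hintf : IntegrableOn f (Set.Ioi (0:ℝ)) := Jintegrable hlam (a+1) hz
  have hintg : IntegrableOn g (Set.Ioi (0:ℝ)) := Jintegrable hlam a hz
  have hgnn : 0 ≤ᵐ[volume.restrict (Set.Ioi (0:ℝ))] g := by
    filter_upwards [ae_restrict_mem measurableSet_Ioi] with s hs
    have hs0 : (0:ℝ) < s := hs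
    have := Real.rpow_nonneg hs0.le a
    positivity
  have hsplit : Set.Ioc (0:ℝ) δ ∪ Set.Ioi δ = Set.Ioi (0:ℝ) := Set.Ioc_union_Ioi_eq_Ioi hδ.le
  have hJ : Jint lam (a+1) z = (∫ s in Set.Ioc (0:ℝ) δ, f s) + ∫ s in Set.Ioi δ, f s := by
    rw [Jint, ← hsplit, setIntegral_union Set.Ioc_disjoint_Ioi_same measurableSet_Ioi
      (hintf.mono_set (hsplit ▸ Set.subset_union_left))
      (hintf.mono_set (hsplit ▸ Set.subset_union_right))]
  rw [hJ]
  have part1 : ∫ s in Set.Ioc (0:ℝ) δ, f s ≤ δ * Jint lam a z := by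
    have h1 : ∫ s in Set.Ioc (0:ℝ) δ, f s ≤ ∫ s in Set.Ioc (0:ℝ) δ, δ * g s := by
      refine setIntegral_mono_on (hintf.mono_set Set.Ioc_subset_Ioi_self)
        ((hintg.mono_set Set.Ioc_subset_Ioi_self).const_mul δ) measurableSet_Ioc ?_
      intro s hs
      obtain ⟨hs0, hsδ⟩ := hs
      rw [hfdef, hgdef]
      simp only
      rw [Real.rpow_add_one (ne_of_gt hs0)]
      have hE := (Real.exp_pos (-lam * s - z ^ 2 / (4 * lam * s))).le
      have hsa := Real.rpow_nonneg hs0.le a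
      have h := mul_le_mul_of_nonneg_right (mul_le_mul_of_nonneg_left hsδ hsa) hE
      nlinarith [h]
    have h2 : ∫ s in Set.Ioc (0:ℝ) δ, δ * g s ≤ δ * Jint lam a z := by
      rw [MeasureTheory.integral_const_mul, Jint]
      refine mul_le_mul_of_nonneg_left ?_ hδ.le
      exact setIntegral_mono_set hintg hgnn
        (HasSubset.Subset.eventuallyLE Set.Ioc_subset_Ioi_self)
    exact h1.trans h2
  have part2 : ∫ s in Set.Ioi δ, f s ≤ δ ^ (a+1) * ∫ s in Set.Ioi δ, Real.exp (-lam * s) := by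
    rw [← MeasureTheory.integral_const_mul]
    refine setIntegral_mono_on (hintf.mono_set (Set.Ioi_subset_Ioi hδ.le))
      (((exp_neg_integrableOn_Ioi δ hlam)).const_mul _) measurableSet_Ioi ?_
    intro s hs
    have hsδ : δ < s := hs
    have hs0 : 0 < s := lt_trans hδ hsδ
    have hA : s ^ (a+1) ≤ δ ^ (a+1) := Real.rpow_le_rpow_of_nonpos hδ hsδ.le ha
    have hB : Real.exp (-lam * s - z ^ 2 / (4 * lam * s)) ≤ Real.exp (-lam * s) := by
      apply Real.exp_le_exp.mpr
      have : 0 ≤ z ^ 2 / (4 * lam * s) := by positivity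
      linarith
    exact mul_le_mul hA hB (Real.exp_pos _).le (Real.rpow_nonneg hδ.le _)
  linarith

lemma ratio_tendsto {lam : ℝ} (hlam : 0 < lam) {a : ℝ} (ha : a + 1 ≤ 0) :
    Tendsto (fun z => Jint lam a z / Jint lam (a+1) z) (nhdsWithin 0 (Set.Ioi 0)) atTop := by
  have ha' : a ≤ -1 := by linarith
  rw [tendsto_atTop]
  intro M
  set M' := max M 1 with hM'
  have hM'0 : 0 < M' := lt_of_lt_of_le one_pos (le_max_right M 1)
  set δ := 1 / (2 * M') with hδdef
  have hδ0 : 0 < δ := by positivity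
  set C := δ ^ (a+1) * ∫ s in Set.Ioi δ, Real.exp (-lam * s) with hC
  have hC0 : 0 ≤ C := by
    refine mul_nonneg (Real.rpow_nonneg hδ0.le _) ?_
    refine setIntegral_nonneg measurableSet_Ioi ?_
    intro s _
    exact (Real.exp_pos _).le
  filter_upwards [(Jtendsto hlam ha').eventually_ge_atTop (2 * M' * C), self_mem_nhdsWithin]
    with z h1 hz
  have hz0 : (0:ℝ) < z := hz
  have hJ1 : 0 < Jint lam a z := Jpos hlam a hz0
  have hJ2 : 0 < Jint lam (a+1) z := Jpos hlam (a+1) hz0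
  have hbound : Jint lam (a+1) z ≤ δ * Jint lam a z + C := by
    rw [hC]; exact Jsucc_le hlam a ha hz0 hδ0
  have hCb : C ≤ δ * Jint lam a z := by
    have : δ * (2 * M' * C) = C := by
      rw [hδdef]; field_simp
    nlinarith
  have hJ2b : Jint lam (a+1) z ≤ Jint lam a z / M' := by
    have h2δ : 2 * δ = 1 / M' := by rw [hδdef]; field_simp
    have : Jint lam (a+1) z ≤ 2 * δ * Jint lam a z := by linarith
    rw [h2δ] at this
    calc Jint lam (a+1) z ≤ 1 / M' * Jint lam a z := this
      _ = Jint lam a z / M' := by ring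
  calc M ≤ M' := le_max_left M 1
    _ ≤ Jint lam a z / Jint lam (a+1) z := by
        rw [le_div_iff₀ hJ2]
        calc M' * Jint lam (a+1) z ≤ M' * (Jint lam a z / M') :=
              mul_le_mul_of_nonneg_left hJ2b hM'0.le
          _ = Jint lam a z := by field_simp

/-- If `ν = k − n/2 + 1 ≤ 0`, then `γ_k(z) → ∞` as `z → 0⁺`. -/
theorem genRatio_diverges_at_origin
    (n : ℕ) (hn : 1 ≤ n) (lam D B mu : ℝ)
    (hlam : 0 < lam) (hD : 0 < D) (hB : 0 < B) (hmu : 0 < mu)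
    (k : ℕ) (hnu : (k : ℝ) - (n : ℝ) / 2 + 1 ≤ 0) :
    Filter.Tendsto (genRatio n lam D B mu k) (nhdsWithin 0 (Set.Ioi 0)) atTop := by
  set a : ℝ := (k : ℝ) - (n : ℝ) / 2 with hadef
  have ha : a + 1 ≤ 0 := hnu
  have hcast : ((k + 1 : ℕ) : ℝ) - (n : ℝ) / 2 = a + 1 := by
    rw [hadef]; push_cast; ring
  have hpi := Real.pi_pos
  have h4 : (0:ℝ) < (4 * π * D) ^ ((n:ℝ)/2) := Real.rpow_pos_of_pos (by positivity) _
  set C1 := mu * (lam * B) ^ k /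
    ((Nat.factorial k : ℝ) * (4 * π * D) ^ ((n : ℝ) / 2)) with hC1
  set C2 := mu * (lam * B) ^ (k + 1) /
    ((Nat.factorial (k + 1) : ℝ) * (4 * π * D) ^ ((n : ℝ) / 2)) with hC2
  have hC1p : 0 < C1 := by
    refine div_pos (by positivity) (mul_pos ?_ h4)
    exact_mod_cast Nat.factorial_pos k
  have hC2p : 0 < C2 := by
    refine div_pos (by positivity) (mul_pos ?_ h4)
    exact_mod_cast Nat.factorial_pos (k + 1)
  have key : genRatio n lam D B mu k =
      fun z => (C1 / C2) * (Jint lam a z / Jint lam (a + 1) z) := by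
    funext z
    unfold genRatio steadyDensity Jint
    rw [hcast, mul_div_mul_comm]
  rw [key]
  exact (ratio_tendsto hlam ha).const_mul_atTop (div_pos hC1p hC2p)
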